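/- arXiv:1902.09638 — 3 statements merged into one kernel-verified Lean document; each statement's English description precedes it below -/
import Mathlib

section
/- Let d ≥ 2 and δ > 0, and let V ⊆ S^{d−1} be a finite set with at least two elements that is a δ-covering of S^{d−1}. Then for every point x of the closed unit ball of ℝ^d there exist distinct points y₁, y₂ ∈ V such that dist(x, segment[y₁, y₂]) ≤ δ; that is, the complete geometric graph G(V) is a δ-covering of the closed unit ball. -/
/-- If `V ⊆ S^{d-1}` is a finite `δ`-covering of the unit sphere with at least two elements,
then the complete geometric graph on `V` is a `δ`-covering of the closed unit ball. -/
theorem graph_covers_ball (d : ℕ) (hd : 2 ≤ d) (δ : ℝ) (hδ : 0 < δ)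
    (V : Finset (EuclideanSpace ℝ (Fin d)))
    (hVsphere : ↑V ⊆ Metric.sphere (0 : EuclideanSpace ℝ (Fin d)) 1)
    (hVcard : 2 ≤ V.card)
    (hVcov : ∀ x ∈ Metric.sphere (0 : EuclideanSpace ℝ (Fin d)) 1, ∃ y ∈ V, dist x y ≤ δ) :
    ∀ x ∈ Metric.closedBall (0 : EuclideanSpace ℝ (Fin d)) 1,
      ∃ y₁ ∈ V, ∃ y₂ ∈ V, y₁ ≠ y₂ ∧ Metric.infDist x (segment ℝ y₁ y₂) ≤ δ := by
  intro x hx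
  rw [Metric.mem_closedBall, dist_zero_right] at hx
  obtain ⟨u, hu, hxu⟩ : ∃ u : EuclideanSpace ℝ (Fin d), ‖u‖ = 1 ∧ x = ‖x‖ • u := by
    by_cases h : x = 0
    · refine ⟨EuclideanSpace.single ⟨0, by omega⟩ (1 : ℝ), ?_, ?_⟩
      · rw [EuclideanSpace.norm_single]; norm_num
      · simp [h]
    · have hne : ‖x‖ ≠ 0 := norm_ne_zero_iff.2 h
      refine ⟨‖x‖⁻¹ • x, ?_, ?_⟩
      · rw [norm_smul, norm_inv, norm_norm, inv_mul_cancel₀ hne]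
      · rw [smul_smul, mul_inv_cancel₀ hne, one_smul]
  set t := ‖x‖ with htdef
  have ht0 : 0 ≤ t := norm_nonneg x
  have hpu : u ∈ Metric.sphere (0 : EuclideanSpace ℝ (Fin d)) 1 := by
    simp [mem_sphere_zero_iff_norm, hu]
  have hqu : -u ∈ Metric.sphere (0 : EuclideanSpace ℝ (Fin d)) 1 := by
    simp [mem_sphere_zero_iff_norm, hu]
  obtain ⟨y₁, hy₁V, hy₁⟩ := hVcov u hpu
  obtain ⟨y₂, hy₂V, hy₂⟩ := hVcov (-u) hqu
  set a := (1 + t) / 2 with hadef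
  set b := (1 - t) / 2 with hbdef
  have ha : 0 ≤ a := by positivity
  have hb : 0 ≤ b := by unfold b; linarith
  have hab : a + b = 1 := by unfold a b; ring
  have hxz : x = a • u + b • (-u) := by
    rw [hxu]
    have hab2 : a - b = t := by unfold a b; ring
    rw [← hab2]; module
  have key : dist x (a • y₁ + b • y₂) ≤ δ := by
    rw [dist_eq_norm, hxz]
    have : a • u + b • (-u) - (a • y₁ + b • y₂) = a • (u - y₁) + b • (-u - y₂) := by
      module
    rw [this]
    calc ‖a • (u - y₁) + b • (-u - y₂)‖
        ≤ ‖a • (u - y₁)‖ + ‖b • (-u - y₂)‖ := norm_add_le _ _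
      _ = a * ‖u - y₁‖ + b * ‖-u - y₂‖ := by
          rw [norm_smul, norm_smul, Real.norm_of_nonneg ha, Real.norm_of_nonneg hb]
      _ ≤ a * δ + b * δ := by
          have h1 : ‖u - y₁‖ ≤ δ := by rw [← dist_eq_norm]; exact hy₁
          have h2 : ‖-u - y₂‖ ≤ δ := by rw [← dist_eq_norm]; exact hy₂
          gcongr
      _ = δ := by rw [← add_mul, hab, one_mul]
  by_cases hne : y₁ = y₂
  · subst hne
    obtain ⟨z, hzV, hz⟩ := Finset.exists_mem_ne (by omega : 1 < V.card) y₁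
    refine ⟨y₁, hy₁V, z, hzV, fun h => hz h.symm, ?_⟩
    have hmem : y₁ ∈ segment ℝ y₁ z := left_mem_segment ℝ y₁ z
    have : dist x y₁ ≤ δ := by
      have : a • y₁ + b • y₁ = y₁ := by rw [← add_smul, hab, one_smul]
      rwa [this] at key
    exact le_trans (Metric.infDist_le_dist_of_mem hmem) this
  · refine ⟨y₁, hy₁V, y₂, hy₂V, hne, ?_⟩
    have hmem : a • y₁ + b • y₂ ∈ segment ℝ y₁ y₂ := ⟨a, b, ha, hb, hab, rfl⟩
    exact le_trans (Metric.infDist_le_dist_of_mem hmem) key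
end

section
/- Let d ≥ 2, r ∈ (0,1), and h > 0. There exists a constant C_d > 0, depending only on d, such that for every x ∈ ℝ^d with ‖x‖ ≤ 1 − r and every y ∈ S^{d−1}, the surface measure of the set of directions {v ∈ S^{d−1} : there exists t > 0 with ‖x + t·v‖ = 1 and ‖x + t·v − y‖ ≤ h} is at most C_d·(h/r)^{d−1}. (That is, for a point at distance at least r from the boundary of the unit ball, the solid angle of directions whose exit point on the unit sphere lies in the spherical cap of radius h around y is of order (h/r)^{d−1}.) -/
open MeasureTheory
open Metric
open scoped NNReal ENNReal RealInnerProductSpace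
set_option maxHeartbeats 1000000

theorem sqrt_diff_le {c a b : ℝ} (hc : 0 < c) (ha : 0 ≤ a) (hb : 0 ≤ b)
    (ha2 : a^2 ≤ 1 - c^2) (hb2 : b^2 ≤ 1 - c^2) :
    |Real.sqrt (1 - a^2) - Real.sqrt (1 - b^2)| ≤ |a - b| / c := by
  have key : ∀ a b : ℝ, 0 ≤ a → 0 ≤ b → a^2 ≤ 1 - c^2 → b^2 ≤ 1 - c^2 →
      Real.sqrt (1 - a^2) - Real.sqrt (1 - b^2) ≤ |a - b| / c := by
    intro a b ha hb ha2 hb2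
    set p := Real.sqrt (1 - a^2) with hp
    set q := Real.sqrt (1 - b^2) with hq
    have hp2 : p^2 = 1 - a^2 := Real.sq_sqrt (by nlinarith)
    have hq2 : q^2 = 1 - b^2 := Real.sq_sqrt (by nlinarith)
    have hpc : c ≤ p := by
      rw [hp, show c = Real.sqrt (c^2) from (Real.sqrt_sq hc.le).symm]
      exact Real.sqrt_le_sqrt (by nlinarith)
    have hqc : c ≤ q := by
      rw [hq, show c = Real.sqrt (c^2) from (Real.sqrt_sq hc.le).symm]
      exact Real.sqrt_le_sqrt (by nlinarith)
    have hab : b - a ≤ |a - b| := by rw [abs_sub_comm]; exact le_abs_self _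
    have habs : 0 ≤ |a - b| := abs_nonneg _
    have ha1 : a ≤ 1 := by nlinarith
    have hb1 : b ≤ 1 := by nlinarith
    rcases le_or_gt p q with hle | hlt
    · calc p - q ≤ 0 := by linarith
        _ ≤ |a - b| / c := by positivity
    · rw [le_div_iff₀ hc]
      have h1 : (p - q) * (p + q) = b^2 - a^2 := by nlinarith
      have h2 : b^2 - a^2 ≤ 2 * |a - b| := by nlinarith
      have h3 : 2 * c ≤ p + q := by linarith
      nlinarith [mul_le_mul_of_nonneg_left h3 (le_of_lt (sub_pos.mpr hlt))]
  rw [abs_sub_le_iff]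
  exact ⟨key a b ha hb ha2 hb2,
    by rw [abs_sub_comm]; exact key b a hb ha hb2 ha2⟩

theorem ball_hm (n : ℕ) (ρ : ℝ) (hρ : 0 ≤ ρ) :
    μH[(n : ℝ)] (closedBall (0 : EuclideanSpace ℝ (Fin n)) ρ)
      ≤ ENNReal.ofReal ((2 * Real.sqrt n * ρ) ^ n) := by
  set e := WithLp.equiv 2 (Fin n → ℝ) with he
  have hA := PiLp.antilipschitzWith_ofLp 2 (fun _ : Fin n => ℝ)
  have hLsymm := hA.to_rightInverse e.right_inv
  set K : ℝ≥0 := (Fintype.card (Fin n) : ℝ≥0) ^ (1 / (2:ℝ≥0∞)).toReal with hK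
  have h1 : closedBall (0 : EuclideanSpace ℝ (Fin n)) ρ
      ⊆ e.symm '' (closedBall (0 : Fin n → ℝ) ρ) := by
    intro v hv
    refine ⟨e v, ?_, e.symm_apply_apply v⟩
    have h2 := (PiLp.lipschitzWith_ofLp 2 (fun _ : Fin n => ℝ)).dist_le_mul v 0
    push_cast at h2
    rw [one_mul] at h2
    exact mem_closedBall.mpr (le_trans h2 (mem_closedBall.mp hv))
  have hcoe : ((K:ℝ)) = Real.sqrt n := by
    rw [hK]
    push_cast [NNReal.coe_rpow]
    rw [Real.sqrt_eq_rpow]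
    norm_num
  have hKr : ((K : ℝ≥0∞)) ^ (n:ℝ) = ENNReal.ofReal (Real.sqrt n ^ n) := by
    rw [← hcoe, ENNReal.rpow_natCast]
    rw [ENNReal.ofReal_pow K.coe_nonneg, ENNReal.ofReal_coe_nnreal]
  calc μH[(n : ℝ)] (closedBall (0 : EuclideanSpace ℝ (Fin n)) ρ)
      ≤ μH[(n : ℝ)] (e.symm '' (closedBall (0 : Fin n → ℝ) ρ)) := measure_mono h1
    _ ≤ (K : ℝ≥0∞) ^ (n:ℝ) * μH[(n : ℝ)] (closedBall (0 : Fin n → ℝ) ρ) :=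
        hLsymm.hausdorffMeasure_image_le (Nat.cast_nonneg n) _
    _ ≤ ENNReal.ofReal ((2 * Real.sqrt n * ρ) ^ n) := by
        have hv : μH[(n : ℝ)] (closedBall (0 : Fin n → ℝ) ρ) = ENNReal.ofReal ((2*ρ)^n) := by
          have h5 := hausdorffMeasure_pi_real (ι := Fin n)
          rw [Fintype.card_fin] at h5
          rw [h5, Real.volume_pi_closedBall _ hρ, Fintype.card_fin]
        rw [hv, hKr, ← ENNReal.ofReal_mul (by positivity), ← mul_pow]
        apply le_of_eq
        congr 1
        ring

theorem cap_hm (d : ℕ) (hd : 2 ≤ d) (e : EuclideanSpace ℝ (Fin d)) (he : ‖e‖ = 1)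
    (c ρ : ℝ) (hc0 : 0 < c) (hc1 : c ≤ 1) (hρ : 0 ≤ ρ) :
    μH[((d - 1 : ℕ) : ℝ)] {v : EuclideanSpace ℝ (Fin d) | ‖v‖ = 1 ∧ c ≤ ⟪e, v⟫ ∧ ‖v - e‖ ≤ ρ}
      ≤ ENNReal.ofReal ((2/c) ^ (d-1) * (2 * Real.sqrt ((d-1 : ℕ) : ℝ) * ρ) ^ (d-1)) := by
  set H := (ℝ ∙ e)ᗮ with hH
  set R := min ρ (Real.sqrt (1 - c^2)) with hR
  have hR0 : 0 ≤ R := le_min hρ (Real.sqrt_nonneg _)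
  have hRρ : R ≤ ρ := min_le_left _ _
  set f : H → EuclideanSpace ℝ (Fin d) :=
    fun u => (u : EuclideanSpace ℝ (Fin d)) + Real.sqrt (1 - ‖(u : EuclideanSpace ℝ (Fin d))‖^2) • e with hf
  set D : Set H := closedBall 0 R with hD
  have hmemD : ∀ u : H, u ∈ D →
      0 ≤ ‖(u : EuclideanSpace ℝ (Fin d))‖ ∧ ‖(u : EuclideanSpace ℝ (Fin d))‖^2 ≤ 1 - c^2 := by
    intro u hu
    have h1 : ‖u‖ ≤ R := by simpa [hD, dist_eq_norm] using hu
    have h2 : ‖(u : EuclideanSpace ℝ (Fin d))‖ = ‖u‖ := (Submodule.coe_norm u).symm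
    refine ⟨norm_nonneg _, ?_⟩
    rw [h2]
    have h3 : ‖u‖ ≤ Real.sqrt (1 - c^2) := h1.trans (min_le_right _ _)
    nlinarith [Real.sq_sqrt (by nlinarith : (0:ℝ) ≤ 1 - c^2), norm_nonneg u,
      Real.sqrt_nonneg (1 - c^2)]
  have horth : ∀ u : H, ⟪e, (u : EuclideanSpace ℝ (Fin d))⟫ = 0 := fun u =>
    Submodule.mem_orthogonal_singleton_iff_inner_right.mp u.2
  have hsub : {v : EuclideanSpace ℝ (Fin d) | ‖v‖ = 1 ∧ c ≤ ⟪e, v⟫ ∧ ‖v - e‖ ≤ ρ} ⊆ f '' D := by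
    rintro v ⟨hv1, hv2, hv3⟩
    set s : ℝ := ⟪e, v⟫ with hs
    have hs0 : 0 ≤ s := le_trans hc0.le hv2
    have hs1 : s ≤ 1 := by
      have h4 := real_inner_le_norm e v
      rw [he, hv1, one_mul] at h4
      exact h4
    have hw : ⟪e, v - s • e⟫ = 0 := by
      rw [inner_sub_right, real_inner_smul_right, real_inner_self_eq_norm_sq, he]
      simp [← hs]
    set u : H := ⟨v - s • e, Submodule.mem_orthogonal_singleton_iff_inner_right.mpr hw⟩ with hu
    have hcoe : (u : EuclideanSpace ℝ (Fin d)) = v - s • e := rfl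
    have hnw : ‖(u : EuclideanSpace ℝ (Fin d))‖^2 = 1 - s^2 := by
      rw [hcoe, norm_sub_sq_real, real_inner_smul_right, norm_smul, he, hv1,
        real_inner_comm, ← hs, Real.norm_eq_abs, abs_of_nonneg hs0]
      ring
    have hsqrt : Real.sqrt (1 - ‖(u : EuclideanSpace ℝ (Fin d))‖^2) = s := by
      rw [hnw, show (1:ℝ) - (1 - s^2) = s^2 by ring, Real.sqrt_sq hs0]
    refine ⟨u, ?_, ?_⟩
    · rw [hD, mem_closedBall, dist_zero_right, Submodule.coe_norm]
      apply le_min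
      · have hdec : v - e = (u : EuclideanSpace ℝ (Fin d)) + (s - 1) • e := by
          rw [hcoe]; module
        have h00 : ⟪(u : EuclideanSpace ℝ (Fin d)), e⟫ = 0 := by
          rw [real_inner_comm]; exact horth u
        have hvd : ‖v - e‖^2 = ‖(u : EuclideanSpace ℝ (Fin d))‖^2 + (s-1)^2 := by
          rw [hdec, norm_add_sq_real, real_inner_smul_right, h00, norm_smul, he,
            mul_one, Real.norm_eq_abs, sq_abs]
          ring
        nlinarith [norm_nonneg (v - e), norm_nonneg (u : EuclideanSpace ℝ (Fin d))]
      · rw [show Real.sqrt (1 - c^2) = Real.sqrt ((1:ℝ) - c^2) from rfl]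
        have h6 : ‖(u : EuclideanSpace ℝ (Fin d))‖^2 ≤ 1 - c^2 := by nlinarith
        have := Real.sqrt_le_sqrt h6
        rwa [Real.sqrt_sq (norm_nonneg _)] at this
    · show (u : EuclideanSpace ℝ (Fin d)) +
        Real.sqrt (1 - ‖(u : EuclideanSpace ℝ (Fin d))‖^2) • e = v
      rw [hsqrt, hcoe]
      module
  have hlip : LipschitzOnWith (Real.toNNReal (2/c)) f D := by
    apply LipschitzOnWith.of_dist_le_mul
    intro u hu u' hu'
    obtain ⟨ha0, ha2⟩ := hmemD u hu
    obtain ⟨hb0, hb2⟩ := hmemD u' hu'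
    set a := ‖(u : EuclideanSpace ℝ (Fin d))‖ with hA
    set b := ‖(u' : EuclideanSpace ℝ (Fin d))‖ with hB
    set δ := Real.sqrt (1 - a^2) - Real.sqrt (1 - b^2) with hδ
    have hdiff : f u - f u' = ((u : EuclideanSpace ℝ (Fin d)) - (u' : EuclideanSpace ℝ (Fin d)))
        + δ • e := by
      show ((u : EuclideanSpace ℝ (Fin d)) + Real.sqrt (1 - a^2) • e)
        - ((u' : EuclideanSpace ℝ (Fin d)) + Real.sqrt (1 - b^2) • e) = _
      rw [hδ]; module
    have horth2 : ⟪(u : EuclideanSpace ℝ (Fin d)) - (u' : EuclideanSpace ℝ (Fin d)), δ • e⟫ = 0 := by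
      have h00 : ⟪(u : EuclideanSpace ℝ (Fin d)), e⟫ = 0 := by
        rw [real_inner_comm]; exact horth u
      have h01 : ⟪(u' : EuclideanSpace ℝ (Fin d)), e⟫ = 0 := by
        rw [real_inner_comm]; exact horth u'
      rw [real_inner_smul_right, inner_sub_left, h00, h01]
      ring
    set N := ‖(u : EuclideanSpace ℝ (Fin d)) - (u' : EuclideanSpace ℝ (Fin d))‖ with hN
    have hN0 : 0 ≤ N := norm_nonneg _
    have hnorm2 : ‖f u - f u'‖^2 = N^2 + δ^2 := by
      rw [hdiff, norm_add_sq_real, horth2, norm_smul, he, mul_one, Real.norm_eq_abs, sq_abs]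
      ring
    have hδle : |δ| ≤ |a - b| / c := sqrt_diff_le hc0 ha0 hb0 ha2 hb2
    have habd : |a - b| ≤ N := abs_norm_sub_norm_le _ _
    have hdistE : dist u u' = N := by
      rw [dist_eq_norm, Submodule.coe_norm]
      rfl
    rw [dist_eq_norm, hdistE, Real.coe_toNNReal _ (by positivity)]
    have h7 : |δ| ≤ N / c := hδle.trans (by gcongr)
    have hδ2 : δ^2 ≤ N^2 / c^2 := by
      have h8 := sq_abs δ
      have h9 : |δ|^2 ≤ (N/c)^2 := by nlinarith [abs_nonneg δ]
      calc δ^2 = |δ|^2 := (sq_abs δ).symm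
        _ ≤ (N/c)^2 := h9
        _ = N^2/c^2 := by field_simp
    have h8 : N^2 ≤ N^2 / c^2 := by
      rw [le_div_iff₀ (by positivity)]
      nlinarith
    have hsq : ‖f u - f u'‖^2 ≤ (2/c * N)^2 := by
      have h10 : (2/c * N)^2 = 4 * (N^2/c^2) := by field_simp; ring
      have h11 : 0 ≤ N^2/c^2 := by positivity
      rw [hnorm2, h10]
      linarith
    refine le_of_pow_le_pow_left₀ two_ne_zero (by positivity : (0:ℝ) ≤ 2/c * N) ?_
    rwa [← sq_abs (‖f u - f u'‖), abs_of_nonneg (norm_nonneg _)] at hsq ⊢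
  -- rank of the hyperplane
  haveI hfact : Fact (Module.finrank ℝ (EuclideanSpace ℝ (Fin d)) = (d-1) + 1) :=
    ⟨by rw [finrank_euclideanSpace_fin]; omega⟩
  have hene : e ≠ 0 := by
    intro h0
    rw [h0, norm_zero] at he
    norm_num at he
  have hrank : Module.finrank ℝ H = d - 1 := Submodule.finrank_orthogonal_span_singleton hene
  set g := ((stdOrthonormalBasis ℝ H).reindex (finCongr hrank)).repr with hg
  have hDg : μH[((d-1:ℕ):ℝ)] D = μH[((d-1:ℕ):ℝ)] (g '' D) :=
    (g.isometry.hausdorffMeasure_image (Or.inl (by positivity)) D).symm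
  have himg : g '' D = closedBall (0 : EuclideanSpace ℝ (Fin (d-1))) R := by
    rw [hD, LinearIsometryEquiv.image_closedBall, map_zero]
  have hDbound : μH[((d-1:ℕ):ℝ)] D ≤ ENNReal.ofReal ((2 * Real.sqrt ((d-1 : ℕ) : ℝ) * ρ) ^ (d-1)) := by
    rw [hDg, himg]
    refine (ball_hm (d-1) R hR0).trans ?_
    apply ENNReal.ofReal_le_ofReal
    exact pow_le_pow_left₀ (mul_nonneg (by positivity) hR0) (mul_le_mul_of_nonneg_left hRρ (mul_nonneg zero_le_two (Real.sqrt_nonneg _))) _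
  have hKpow : ((Real.toNNReal (2/c) : ℝ≥0∞)) ^ (((d-1:ℕ)):ℝ) =
      ENNReal.ofReal ((2/c) ^ (d-1)) := by
    rw [ENNReal.rpow_natCast, ENNReal.ofReal_pow (by positivity)]
    rfl
  calc μH[((d - 1 : ℕ) : ℝ)] {v : EuclideanSpace ℝ (Fin d) | ‖v‖ = 1 ∧ c ≤ ⟪e, v⟫ ∧ ‖v - e‖ ≤ ρ}
      ≤ μH[((d - 1 : ℕ) : ℝ)] (f '' D) := measure_mono hsub
    _ ≤ (Real.toNNReal (2/c) : ℝ≥0∞) ^ (((d-1:ℕ)):ℝ) * μH[((d - 1 : ℕ) : ℝ)] D :=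
        hlip.hausdorffMeasure_image_le (by positivity)
    _ ≤ ENNReal.ofReal ((2/c) ^ (d-1)) * ENNReal.ofReal ((2 * Real.sqrt ((d-1 : ℕ) : ℝ) * ρ) ^ (d-1)) := by
        rw [hKpow]
        exact mul_le_mul_right hDbound _
    _ = ENNReal.ofReal ((2/c) ^ (d-1) * (2 * Real.sqrt ((d-1 : ℕ) : ℝ) * ρ) ^ (d-1)) :=
        (ENNReal.ofReal_mul (by positivity)).symm

theorem sphere_hm (d : ℕ) (hd : 2 ≤ d) :
    μH[((d-1:ℕ):ℝ)] (sphere (0 : EuclideanSpace ℝ (Fin d)) 1)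
      ≤ ENNReal.ofReal ((2*(d:ℝ)) *
          ((2 / (Real.sqrt d)⁻¹)^(d-1) * (2 * Real.sqrt ((d-1:ℕ):ℝ) * 2)^(d-1))) := by
  have hd0 : (0:ℝ) < d := by positivity
  have hsd : (1:ℝ) ≤ Real.sqrt d := by
    rw [show (1:ℝ) = Real.sqrt 1 from (Real.sqrt_one).symm]
    exact Real.sqrt_le_sqrt (by exact_mod_cast Nat.one_le_of_lt hd)
  have hsd0 : (0:ℝ) < Real.sqrt d := lt_of_lt_of_le one_pos hsd
  set c : ℝ := (Real.sqrt d)⁻¹ with hc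
  have hc0 : 0 < c := by positivity
  have hc1 : c ≤ 1 := by
    rw [hc]
    exact inv_le_one_of_one_le₀ hsd
  set E : Fin d → Bool → EuclideanSpace ℝ (Fin d) :=
    fun i σ => EuclideanSpace.single i ((if σ then 1 else -1 : ℝ)) with hE
  have hEnorm : ∀ i σ, ‖E i σ‖ = 1 := by
    intro i σ
    rw [hE]
    simp only [EuclideanSpace.norm_single, Real.norm_eq_abs]
    split_ifs <;> norm_num
  have hcover : sphere (0 : EuclideanSpace ℝ (Fin d)) 1 ⊆
      ⋃ (i : Fin d) (σ : Bool),
        {v : EuclideanSpace ℝ (Fin d) | ‖v‖ = 1 ∧ c ≤ ⟪E i σ, v⟫ ∧ ‖v - E i σ‖ ≤ 2} := by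
    intro v hv
    have hv1 : ‖v‖ = 1 := by rwa [mem_sphere_zero_iff_norm] at hv
    have hsum : ∑ i, |v i|^2 = 1 := by
      have h1 : ‖v‖ = Real.sqrt (∑ i, ‖v i‖^2) := EuclideanSpace.norm_eq v
      rw [hv1] at h1
      have h2 := congrArg (fun t : ℝ => t^2) h1
      simp only [one_pow] at h2
      rw [Real.sq_sqrt (by positivity)] at h2
      simpa [Real.norm_eq_abs] using h2.symm
    have hex : ∃ i, 1/(d:ℝ) ≤ |v i|^2 := by
      by_contra hcon
      push_neg at hcon
      haveI : Nonempty (Fin d) := Fin.pos_iff_nonempty.mp (by omega)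
      have h3 : ∑ i, |v i|^2 < ∑ _i : Fin d, 1/(d:ℝ) :=
        Finset.sum_lt_sum_of_nonempty Finset.univ_nonempty (fun i _ => hcon i)
      rw [Finset.sum_const, Finset.card_univ, Fintype.card_fin, nsmul_eq_mul] at h3
      rw [hsum] at h3
      field_simp at h3
      exact lt_irrefl _ h3
    obtain ⟨i, hi⟩ := hex
    have habs : c ≤ |v i| := by
      have h4 : Real.sqrt (1/(d:ℝ)) ≤ Real.sqrt (|v i|^2) := Real.sqrt_le_sqrt hi
      rwa [Real.sqrt_sq (abs_nonneg _), one_div, Real.sqrt_inv] at h4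
    refine Set.mem_iUnion.mpr ⟨i, Set.mem_iUnion.mpr ⟨decide (0 ≤ v i), hv1, ?_, ?_⟩⟩
    · rw [hE]
      simp only
      rw [EuclideanSpace.inner_single_left]
      rcases le_or_gt 0 (v i) with h5 | h5
      · simp only [h5, decide_true]
        rw [abs_of_nonneg h5] at habs
        simpa using habs
      · simp only [not_le.mpr h5, decide_false]
        rw [abs_of_neg h5] at habs
        simpa using habs
    · calc ‖v - E i (decide (0 ≤ v i))‖ ≤ ‖v‖ + ‖E i (decide (0 ≤ v i))‖ := norm_sub_le _ _
        _ ≤ 2 := by rw [hv1, hEnorm]; norm_num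
  calc μH[((d-1:ℕ):ℝ)] (sphere (0 : EuclideanSpace ℝ (Fin d)) 1)
      ≤ ∑' (i : Fin d), ∑' (σ : Bool), μH[((d-1:ℕ):ℝ)]
          {v : EuclideanSpace ℝ (Fin d) | ‖v‖ = 1 ∧ c ≤ ⟪E i σ, v⟫ ∧ ‖v - E i σ‖ ≤ 2} :=
        (measure_mono hcover).trans ((measure_iUnion_le _).trans
          (ENNReal.tsum_le_tsum fun i => measure_iUnion_le _))
    _ ≤ ∑' (_i : Fin d), ∑' (_σ : Bool),
          ENNReal.ofReal ((2/c)^(d-1) * (2 * Real.sqrt ((d-1:ℕ):ℝ) * 2)^(d-1)) :=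
        ENNReal.tsum_le_tsum fun i => ENNReal.tsum_le_tsum fun σ =>
          cap_hm d hd (E i σ) (hEnorm i σ) c 2 hc0 hc1 (by norm_num)
    _ = (d : ℝ≥0∞) * ((2 : ℝ≥0∞) *
          ENNReal.ofReal ((2/c)^(d-1) * (2 * Real.sqrt ((d-1:ℕ):ℝ) * 2)^(d-1))) := by
        rw [tsum_fintype]
        have hb : ∀ B : ℝ≥0∞, ∑' (_σ : Bool), B = 2 * B := by
          intro B
          rw [tsum_bool, two_mul]
        simp only [hb]
        rw [Finset.sum_const, Finset.card_univ, Fintype.card_fin, nsmul_eq_mul]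
    _ ≤ ENNReal.ofReal ((2*(d:ℝ)) *
          ((2 / (Real.sqrt d)⁻¹)^(d-1) * (2 * Real.sqrt ((d-1:ℕ):ℝ) * 2)^(d-1))) := by
        rw [← hc]
        rw [show (2*(d:ℝ)) * ((2/c)^(d-1) * (2 * Real.sqrt ((d-1:ℕ):ℝ) * 2)^(d-1))
          = (d:ℝ) * (2 * ((2/c)^(d-1) * (2 * Real.sqrt ((d-1:ℕ):ℝ) * 2)^(d-1))) by ring]
        rw [ENNReal.ofReal_mul (by positivity : (0:ℝ) ≤ (d:ℝ)), ENNReal.ofReal_natCast,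
          ENNReal.ofReal_mul (by norm_num : (0:ℝ) ≤ 2), ENNReal.ofReal_ofNat,
          ENNReal.ofReal_mul (by positivity)]

theorem normalize_lip {E : Type*} [NormedAddCommGroup E] [NormedSpace ℝ E] {r : ℝ} (hr : 0 < r)
    (a b : E) (ha : r ≤ ‖a‖) (hb : r ≤ ‖b‖) :
    ‖‖a‖⁻¹ • a - ‖b‖⁻¹ • b‖ ≤ 2/r * ‖a - b‖ := by
  have ha0 : 0 < ‖a‖ := lt_of_lt_of_le hr ha
  have hb0 : 0 < ‖b‖ := lt_of_lt_of_le hr hb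
  have hid : ‖a‖⁻¹ • a - ‖b‖⁻¹ • b = ‖a‖⁻¹ • (a - b) + (‖a‖⁻¹ - ‖b‖⁻¹) • b := by
    module
  have h1 : ‖(‖a‖⁻¹ : ℝ) • (a - b)‖ = ‖a‖⁻¹ * ‖a - b‖ := by
    rw [norm_smul, Real.norm_eq_abs, abs_of_pos (by positivity)]
  have h2 : ‖((‖a‖⁻¹ - ‖b‖⁻¹ : ℝ)) • b‖ ≤ ‖a‖⁻¹ * ‖a - b‖ := by
    rw [norm_smul, Real.norm_eq_abs]
    have h3 : ‖a‖⁻¹ - ‖b‖⁻¹ = (‖b‖ - ‖a‖)/(‖a‖*‖b‖) := by field_simp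
    have h4 : |‖b‖ - ‖a‖| ≤ ‖a - b‖ := by
      rw [show ‖a - b‖ = ‖b - a‖ from (norm_sub_rev a b)]
      exact abs_norm_sub_norm_le b a
    rw [h3, abs_div, abs_of_pos (by positivity : (0:ℝ) < ‖a‖*‖b‖)]
    rw [div_mul_eq_mul_div, div_le_iff₀ (by positivity)]
    calc |‖b‖ - ‖a‖| * ‖b‖ ≤ ‖a - b‖ * ‖b‖ := by
          exact mul_le_mul_of_nonneg_right h4 (norm_nonneg b)
      _ = ‖a‖⁻¹ * ‖a - b‖ * (‖a‖ * ‖b‖) := by field_simp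
  have h5 : ‖a‖⁻¹ ≤ r⁻¹ := by
    apply inv_anti₀ hr ha
  calc ‖‖a‖⁻¹ • a - ‖b‖⁻¹ • b‖
      ≤ ‖(‖a‖⁻¹ : ℝ) • (a - b)‖ + ‖((‖a‖⁻¹ - ‖b‖⁻¹ : ℝ)) • b‖ := by
        rw [hid]; exact norm_add_le _ _
    _ ≤ ‖a‖⁻¹ * ‖a - b‖ + ‖a‖⁻¹ * ‖a - b‖ := by rw [h1]; exact add_le_add_right h2 _
    _ = 2 * ‖a‖⁻¹ * ‖a - b‖ := by ring
    _ ≤ 2/r * ‖a - b‖ := by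
        apply mul_le_mul_of_nonneg_right _ (norm_nonneg _)
        rw [div_eq_mul_inv]
        nlinarith

/-- For a point `x` at distance at least `r` from the unit sphere, the solid angle of
directions whose exit point on the unit sphere lies in the spherical cap of radius `h`
around a boundary point `y` is at most `C_d (h/r)^{d-1}`, the constant depending only
on the dimension.  The solid angle is measured by the `(d-1)`-dimensional Hausdorff
measure on the unit sphere of directions. -/
theorem exit_cap_solid_angle (d : ℕ) (hd : 2 ≤ d) :
    ∃ C : ℝ, 0 < C ∧ ∀ r : ℝ, r ∈ Set.Ioo (0 : ℝ) 1 → ∀ h : ℝ, 0 < h →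
      ∀ x : EuclideanSpace ℝ (Fin d), ‖x‖ ≤ 1 - r →
      ∀ y ∈ Metric.sphere (0 : EuclideanSpace ℝ (Fin d)) 1,
        μH[(d : ℝ) - 1] {v : EuclideanSpace ℝ (Fin d) | ‖v‖ = 1 ∧
            ∃ t : ℝ, 0 < t ∧ ‖x + t • v‖ = 1 ∧ ‖x + t • v - y‖ ≤ h}
          ≤ ENNReal.ofReal (C * (h / r) ^ (d - 1)) := by
  have hcast : ((d - 1 : ℕ) : ℝ) = (d : ℝ) - 1 := by
    have : (1:ℕ) ≤ d := by omega
    push_cast [Nat.cast_sub this]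
    ring
  set Md : ℝ := (2*(d:ℝ)) *
      ((2 / (Real.sqrt d)⁻¹)^(d-1) * (2 * Real.sqrt ((d-1:ℕ):ℝ) * 2)^(d-1)) with hMd
  have hMd0 : 0 ≤ Md := by
    rw [hMd]
    have : (0:ℝ) ≤ 2 / (Real.sqrt d)⁻¹ := by positivity
    positivity
  set C1 : ℝ := (8 * (2 * Real.sqrt ((d-1:ℕ):ℝ)))^(d-1) with hC1
  have hC10 : 0 < C1 := by
    rw [hC1]
    apply pow_pos
    have h1 : (1:ℝ) ≤ ((d-1:ℕ):ℝ) := by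
      have : (1:ℕ) ≤ d - 1 := by omega
      exact_mod_cast this
    nlinarith [Real.sqrt_le_sqrt h1, Real.sqrt_one, Real.sqrt_nonneg ((d-1:ℕ):ℝ),
      Real.one_le_sqrt.mpr h1]
  set C : ℝ := C1 + (4:ℝ)^(d-1) * Md with hC
  refine ⟨C, by positivity, ?_⟩
  rintro r ⟨hr0, hr1⟩ h h0 x hx y hy
  have hy1 : ‖y‖ = 1 := by rwa [mem_sphere_zero_iff_norm] at hy
  rw [← hcast]
  set T : Set (EuclideanSpace ℝ (Fin d)) := sphere 0 1 ∩ closedBall y h with hT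
  set g : EuclideanSpace ℝ (Fin d) → EuclideanSpace ℝ (Fin d) :=
    fun z => ‖z - x‖⁻¹ • (z - x) with hg
  have hnormzT : ∀ z ∈ T, r ≤ ‖z - x‖ := by
    rintro z ⟨hz1, _⟩
    rw [mem_sphere_zero_iff_norm] at hz1
    have := norm_sub_norm_le z x
    rw [hz1] at this
    linarith
  -- S ⊆ g '' T
  have hsub : {v : EuclideanSpace ℝ (Fin d) | ‖v‖ = 1 ∧
      ∃ t : ℝ, 0 < t ∧ ‖x + t • v‖ = 1 ∧ ‖x + t • v - y‖ ≤ h} ⊆ g '' T := by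
    rintro v ⟨hv1, t, ht0, htn, hty⟩
    refine ⟨x + t • v, ⟨?_, ?_⟩, ?_⟩
    · rwa [mem_sphere_zero_iff_norm]
    · rwa [mem_closedBall_iff_norm]
    · rw [hg]
      simp only
      rw [add_sub_cancel_left, norm_smul, Real.norm_eq_abs, abs_of_pos ht0, hv1, mul_one,
        smul_smul, inv_mul_cancel₀ (ne_of_gt ht0), one_smul]
  -- Lipschitz
  have hlipg : LipschitzOnWith (Real.toNNReal (2/r)) g T := by
    apply LipschitzOnWith.of_dist_le_mul
    intro z hz z' hz'
    rw [dist_eq_norm, dist_eq_norm, Real.coe_toNNReal _ (by positivity)]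
    have hzz : z - x - (z' - x) = z - z' := by abel
    have := normalize_lip hr0 (z - x) (z' - x) (hnormzT z hz) (hnormzT z' hz')
    rw [hzz] at this
    exact this
  have hKpow : ((Real.toNNReal (2/r) : ℝ≥0∞)) ^ (((d-1:ℕ)):ℝ) =
      ENNReal.ofReal ((2/r) ^ (d-1)) := by
    rw [ENNReal.rpow_natCast, ENNReal.ofReal_pow (by positivity)]
    rfl
  have hchain : μH[((d-1:ℕ) : ℝ)] {v : EuclideanSpace ℝ (Fin d) | ‖v‖ = 1 ∧
      ∃ t : ℝ, 0 < t ∧ ‖x + t • v‖ = 1 ∧ ‖x + t • v - y‖ ≤ h}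
      ≤ ENNReal.ofReal ((2/r) ^ (d-1)) * μH[((d-1:ℕ) : ℝ)] T := by
    rw [← hKpow]
    exact (measure_mono hsub).trans (hlipg.hausdorffMeasure_image_le (by positivity))
  rcases le_or_gt h (1/2) with hsmall | hbig
  · -- small cap case
    have hTsub : T ⊆ {v : EuclideanSpace ℝ (Fin d) | ‖v‖ = 1 ∧ (1:ℝ)/2 ≤ ⟪y, v⟫ ∧ ‖v - y‖ ≤ h} := by
      rintro v ⟨hv1, hv2⟩
      rw [mem_sphere_zero_iff_norm] at hv1
      rw [mem_closedBall_iff_norm] at hv2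
      refine ⟨hv1, ?_, hv2⟩
      have h6 : ‖v - y‖^2 = 2 - 2 * ⟪v, y⟫ := by
        rw [norm_sub_sq_real, hv1, hy1]; ring
      have h7 : ‖v - y‖^2 ≤ (1/2)^2 := by
        have := norm_nonneg (v - y)
        nlinarith
      rw [real_inner_comm]
      nlinarith
    have hcap := cap_hm d hd y hy1 (1/2) h (by norm_num) (by norm_num) h0.le
    have hTb : μH[((d-1:ℕ) : ℝ)] T ≤
        ENNReal.ofReal ((2/(1/2:ℝ)) ^ (d-1) * (2 * Real.sqrt ((d-1 : ℕ) : ℝ) * h) ^ (d-1)) :=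
      (measure_mono hTsub).trans hcap
    refine hchain.trans ?_
    calc ENNReal.ofReal ((2/r) ^ (d-1)) * μH[((d-1:ℕ) : ℝ)] T
        ≤ ENNReal.ofReal ((2/r) ^ (d-1)) *
          ENNReal.ofReal ((2/(1/2:ℝ)) ^ (d-1) * (2 * Real.sqrt ((d-1 : ℕ) : ℝ) * h) ^ (d-1)) :=
          mul_le_mul_right hTb _
      _ = ENNReal.ofReal ((2/r) ^ (d-1) *
          ((2/(1/2:ℝ)) ^ (d-1) * (2 * Real.sqrt ((d-1 : ℕ) : ℝ) * h) ^ (d-1))) :=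
          (ENNReal.ofReal_mul (by positivity)).symm
      _ ≤ ENNReal.ofReal (C * (h/r) ^ (d-1)) := by
          apply ENNReal.ofReal_le_ofReal
          have hkey : (2/r) ^ (d-1) * ((2/(1/2:ℝ)) ^ (d-1)
              * (2 * Real.sqrt ((d-1 : ℕ) : ℝ) * h) ^ (d-1)) = C1 * (h/r) ^ (d-1) := by
            rw [hC1, ← mul_pow, ← mul_pow, ← mul_pow]
            congr 1
            field_simp
            ring
          rw [hkey, hC]
          have hX : (0:ℝ) ≤ (h/r)^(d-1) := by positivity
          nlinarith [mul_nonneg (mul_nonneg (pow_nonneg (by norm_num : (0:ℝ) ≤ 4) (d-1)) hMd0) hX]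
  · -- large h case
    have hTb : μH[((d-1:ℕ) : ℝ)] T ≤ ENNReal.ofReal Md :=
      (measure_mono (Set.inter_subset_left)).trans (sphere_hm d hd)
    refine hchain.trans ?_
    calc ENNReal.ofReal ((2/r) ^ (d-1)) * μH[((d-1:ℕ) : ℝ)] T
        ≤ ENNReal.ofReal ((2/r) ^ (d-1)) * ENNReal.ofReal Md := mul_le_mul_right hTb _
      _ = ENNReal.ofReal ((2/r) ^ (d-1) * Md) := (ENNReal.ofReal_mul (by positivity)).symm
      _ ≤ ENNReal.ofReal (C * (h/r) ^ (d-1)) := by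
          apply ENNReal.ofReal_le_ofReal
          have h8 : (2/r) ≤ 4 * (h/r) := by
            rw [div_le_iff₀ hr0] at *
            have : 4 * (h/r) * r = 4 * h := by field_simp
            nlinarith
          have h9 : (2/r)^(d-1) ≤ (4*(h/r))^(d-1) :=
            pow_le_pow_left₀ (by positivity) h8 _
          have h10 : (4*(h/r))^(d-1) = 4^(d-1) * (h/r)^(d-1) := mul_pow _ _ _
          have h11 : (0:ℝ) ≤ (h/r)^(d-1) := by positivity
          rw [hC]
          nlinarith [mul_le_mul_of_nonneg_right h9 hMd0]
end

section
/- Let Ω ⊆ ℝ^d (d ≥ 2) be open, let σ_tf, σ_s, δσ : Ω → ℝ, let p : ℝ → ℝ be a bounded measurable scattering phase function with associated scattering operator K, and let u, w : Ω × S^{d−1} → ℝ be such that for each fixed v the maps x ↦ u(x,v), x ↦ w(x,v) are differentiable on Ω and for each fixed x the maps v ↦ u(x,v), v ↦ w(x,v) are integrable on S^{d−1}. Suppose ψ(x) := ∫_{S^{d−1}} u(x,v)·u(x,−v) dv > 0 on Ω, that w satisfies v·∇w + σ_tf·w = σ_s·Kw − δσ·u on Ω × S^{d−1}, and that the internal-data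 identity −δσ(x)·ψ(x) − 2·σ_tf(x)·∫_{S^{d−1}} w(x,v)·u(x,−v) dv + 2·σ_s(x)·∫_{S^{d−1}} Kw(x,v)·u(x,−v) dv = 0 holds for all x ∈ Ω. Then w satisfies the equation v·∇w(x,v) + σ_tf(x)·w(x,v) = σ_s(x)·Kw(x,v) + 2·σ_tf(x)·K₁w(x,v) − 2·σ_s(x)·K₁(Kw)(x,v) on Ω × S^{d−1}, where K₁f(x,v) = (1/ψ(x))·u(x,v)·∫_{S^{d−1}} u(x,−v′)·f(x,v′) dv′. -/
open MeasureTheory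
open scoped RealInnerProductSpace

/-- The surface measure on the unit sphere of directions in `ℝ^d`, realized as the
`(d-1)`-dimensional Hausdorff measure restricted to the unit sphere. -/
noncomputable def sphereMeasure (d : ℕ) : Measure (EuclideanSpace ℝ (Fin d)) :=
  (μH[(d : ℝ) - 1]).restrict (Metric.sphere (0 : EuclideanSpace ℝ (Fin d)) 1)

/-- If `w` solves the linearized transport equation with source `-δσ·u` and the internal
data `-δσ ψ - 2 σ_tf ∫ w(x,v) u(x,-v) dv + 2 σ_s ∫ (Kw)(x,v) u(x,-v) dv` vanishes on `Ω`,
where `ψ(x) = ∫ u(x,v) u(x,-v) dv > 0`, then `w` satisfies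
`v·∇w + σ_tf w = σ_s Kw + 2 σ_tf K₁ w - 2 σ_s K₁(Kw)`, with
`K₁ f(x,v) = ψ(x)⁻¹ u(x,v) ∫ u(x,-v') f(x,v') dv'`. -/
theorem vanishing_internal_data_rte (d : ℕ) (hd : 2 ≤ d)
    (Ω : Set (EuclideanSpace ℝ (Fin d))) (hΩ : IsOpen Ω)
    (σtf σs δσ : EuclideanSpace ℝ (Fin d) → ℝ)
    (p : ℝ → ℝ) (hpm : Measurable p) (hpb : ∃ Mp : ℝ, ∀ t : ℝ, |p t| ≤ Mp)
    (u w : EuclideanSpace ℝ (Fin d) → EuclideanSpace ℝ (Fin d) → ℝ)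
    (hu_diff : ∀ v ∈ Metric.sphere (0 : EuclideanSpace ℝ (Fin d)) 1, ∀ x ∈ Ω,
      DifferentiableAt ℝ (fun y => u y v) x)
    (hw_diff : ∀ v ∈ Metric.sphere (0 : EuclideanSpace ℝ (Fin d)) 1, ∀ x ∈ Ω,
      DifferentiableAt ℝ (fun y => w y v) x)
    (hu_int : ∀ x ∈ Ω, Integrable (fun v => u x v) (sphereMeasure d))
    (hw_int : ∀ x ∈ Ω, Integrable (fun v => w x v) (sphereMeasure d))
    (ψ : EuclideanSpace ℝ (Fin d) → ℝ)
    (hψ_def : ∀ x, ψ x = ∫ v, u x v * u x (-v) ∂(sphereMeasure d))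
    (hψ_pos : ∀ x ∈ Ω, 0 < ψ x)
    (hw_eq : ∀ x ∈ Ω, ∀ v ∈ Metric.sphere (0 : EuclideanSpace ℝ (Fin d)) 1,
      fderiv ℝ (fun y => w y v) x v + σtf x * w x v
        = σs x * (∫ v', p ⟪v, v'⟫ * w x v' ∂(sphereMeasure d)) - δσ x * u x v)
    (hdata : ∀ x ∈ Ω,
      -δσ x * ψ x
          - 2 * σtf x * (∫ v, w x v * u x (-v) ∂(sphereMeasure d))
          + 2 * σs x * (∫ v, (∫ v', p ⟪v, v'⟫ * w x v' ∂(sphereMeasure d)) * u x (-v)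
              ∂(sphereMeasure d)) = 0) :
    ∀ x ∈ Ω, ∀ v ∈ Metric.sphere (0 : EuclideanSpace ℝ (Fin d)) 1,
      fderiv ℝ (fun y => w y v) x v + σtf x * w x v
        = σs x * (∫ v', p ⟪v, v'⟫ * w x v' ∂(sphereMeasure d))
          + 2 * σtf x * ((ψ x)⁻¹ * u x v *
              ∫ v', u x (-v') * w x v' ∂(sphereMeasure d))
          - 2 * σs x * ((ψ x)⁻¹ * u x v *
              ∫ v', u x (-v') * (∫ v'', p ⟪v', v''⟫ * w x v'' ∂(sphereMeasure d))
                ∂(sphereMeasure d)) := by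
  intro x hx v hv
  have hA : (∫ v', u x (-v') * w x v' ∂(sphereMeasure d))
      = ∫ v', w x v' * u x (-v') ∂(sphereMeasure d) := by
    simp [mul_comm]
  have hB : (∫ v', u x (-v') * (∫ v'', p ⟪v', v''⟫ * w x v'' ∂(sphereMeasure d))
        ∂(sphereMeasure d))
      = ∫ v', (∫ v'', p ⟪v', v''⟫ * w x v'' ∂(sphereMeasure d)) * u x (-v')
        ∂(sphereMeasure d) := by
    simp [mul_comm]
  have hψ : ψ x ≠ 0 := (hψ_pos x hx).ne'
  have hd := hdata x hx
  rw [hw_eq x hx v hv, hA, hB]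
  set A := ∫ v', w x v' * u x (-v') ∂(sphereMeasure d) with hA'
  set B := ∫ v', (∫ v'', p ⟪v', v''⟫ * w x v'' ∂(sphereMeasure d)) * u x (-v')
      ∂(sphereMeasure d) with hB'
  have hδ : δσ x * ψ x = 2 * σs x * B - 2 * σtf x * A := by
    rw [hB']; linarith [hd]
  have : δσ x = (ψ x)⁻¹ * (2 * σs x * B - 2 * σtf x * A) := by
    field_simp
    linarith [hδ]
  rw [this]
  ring
end
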